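/- Fix integers n ≥ 1, m ≥ 1, k ≥ 1 and assume f is admissible. If qⱼ = n − j for every j = 1, …, n and the restrictions are non-redundant at every reduced-form point (B, L) with ((L⁻¹)ᵀ, B(L⁻¹)ᵀ) ∈ U, then for every (A₀, A₊) ∈ U there exists an n×n orthogonal matrix P such that (A₀P, A₊P) ∈ R. -/

import Mathlib

open Matrix MeasureTheory

noncomputable section

/-- A structural parameter point `(A₀, A₊)`. -/
abbrev Struct (n m : ℕ) : Type :=
  Matrix (Fin n) (Fin n) ℝ × Matrix (Fin m) (Fin n) ℝ

/-- Index set of the lower-triangular entries of an `n×n` matrix. -/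
abbrev LowIdx (n : ℕ) : Type := {p : Fin n × Fin n // p.2 ≤ p.1}

/-- The reduced-form parameter space: a pair `(B, ℓ)` where `ℓ` lists the lower-triangular
entries of the Cholesky factor `L`.  This identifies the reduced-form parameter space with
(an open subset of) `ℝ^{mn + n(n+1)/2}`, carrying Lebesgue measure. -/
abbrev RedParam (n m : ℕ) : Type := ((Fin m) → (Fin n) → ℝ) × (LowIdx n → ℝ)

/-- The lower-triangular matrix `L` encoded by `ℓ`. -/
def cholOf {n : ℕ} (ℓ : LowIdx n → ℝ) : Matrix (Fin n) (Fin n) ℝ :=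
  Matrix.of fun i j => if h : j ≤ i then ℓ ⟨(i, j), h⟩ else 0

/-- The reduced-form point `(B, ℓ)` is admissible: `L` has strictly positive diagonal. -/
def PosDiag {n : ℕ} (ℓ : LowIdx n → ℝ) : Prop :=
  ∀ i : Fin n, 0 < ℓ ⟨(i, i), le_rfl⟩

/-- The structural point `(A₀, A₊) = ((L⁻¹)ᵀ, B (L⁻¹)ᵀ)` induced by a reduced-form point. -/
def structOf {n m : ℕ} (r : RedParam n m) : Struct n m :=
  (((cholOf r.2)⁻¹)ᵀ, Matrix.of r.1 * ((cholOf r.2)⁻¹)ᵀ)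

/-- `P` is an orthogonal matrix. -/
def IsOrthogonalMat {n : ℕ} (P : Matrix (Fin n) (Fin n) ℝ) : Prop := P * Pᵀ = 1

/-- Stack a `k×n` matrix `G` on top of the `s` row vectors `p 0, …, p (s-1)`. -/
def stack {k s n : ℕ} (G : Matrix (Fin k) (Fin n) ℝ) (p : Fin s → Fin n → ℝ) :
    Matrix (Fin (k + s)) (Fin n) ℝ :=
  Matrix.of (Fin.append (fun i => G i) p)

/-- `f` is admissible on `U`: `f(A₀P, A₊P) = f(A₀, A₊)P` for every orthogonal `P`. -/
def Admissible {n m k : ℕ} (U : Set (Struct n m))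
    (f : Struct n m → Matrix (Fin k) (Fin n) ℝ) : Prop :=
  ∀ x ∈ U, ∀ P : Matrix (Fin n) (Fin n) ℝ, IsOrthogonalMat P →
    f (x.1 * P, x.2 * P) = f x * P

/-- Coordinates version of the structural space, used to state smoothness. -/
abbrev PiStruct (n m : ℕ) : Type := ((Fin n) → (Fin n) → ℝ) × ((Fin m) → (Fin n) → ℝ)

/-- Reinterpret coordinates as a structural point. -/
def toStruct {n m : ℕ} (x : PiStruct n m) : Struct n m := (Matrix.of x.1, Matrix.of x.2)

/-- `f` is regular on `U`: `U` is open and `f` is continuously differentiable on `U` with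
surjective total derivative (rank `kn`) at every point of `U`. -/
def Regular {n m k : ℕ} (U : Set (Struct n m))
    (f : Struct n m → Matrix (Fin k) (Fin n) ℝ) : Prop :=
  IsOpen U ∧
  ContDiffOn ℝ 1 (fun x : PiStruct n m => fun i j => f (toStruct x) i j)
    (toStruct ⁻¹' U) ∧
  ∀ x ∈ toStruct ⁻¹' U,
    Function.Surjective
      (fderivWithin ℝ (fun y : PiStruct n m => fun i j => f (toStruct y) i j)
        (toStruct ⁻¹' U) x)

/-- `f` is strongly regular on `U`: regular and with image dense in the `k×n` matrices. -/
def StronglyRegular {n m k : ℕ} (U : Set (Struct n m))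
    (f : Struct n m → Matrix (Fin k) (Fin n) ℝ) : Prop :=
  Regular U f ∧
  Dense ((fun x : PiStruct n m => fun i j => f (toStruct x) i j) '' (toStruct ⁻¹' U))

/-- `N` is a normalization rule: every structural point has a unique sign normalization
`D = diag(±1)` with `(A₀D, A₊D) ∈ N`. -/
def IsNormalization {n m : ℕ} (N : Set (Struct n m)) : Prop :=
  ∀ x : Struct n m, IsUnit x.1 →
    ∃! d : Fin n → ℝ, (∀ i, d i = 1 ∨ d i = -1) ∧
      (x.1 * Matrix.diagonal d, x.2 * Matrix.diagonal d) ∈ N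

/-- The restricted set `R = {(A₀,A₊) ∈ U ∩ N : Qⱼ f(A₀,A₊) eⱼ = 0, j = 1,…,n}`. -/
def RSet {n m k : ℕ} (U N : Set (Struct n m))
    (f : Struct n m → Matrix (Fin k) (Fin n) ℝ)
    (Q : Fin n → Matrix (Fin k) (Fin k) ℝ) : Set (Struct n m) :=
  {x | x ∈ U ∩ N ∧ ∀ (j : Fin n) (i : Fin k), (Q j * f x) i j = 0}

/-- The restrictions are non-redundant at the reduced-form point `r = (B, ℓ)`: with
`(A₀, A₊) = ((L⁻¹)ᵀ, B(L⁻¹)ᵀ)`, there exist orthonormal vectors `p₁, …, pₙ` such that for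
every `j`, `Qⱼ f(A₀,A₊) pⱼ = 0` and the matrix `Q̃ⱼ` obtained by stacking `Qⱼ f(A₀,A₊)` on
top of the rows `p₁ᵀ, …, p_{j-1}ᵀ` has rank `n - 1`. -/
def NonRedundantAt {n m k : ℕ}
    (f : Struct n m → Matrix (Fin k) (Fin n) ℝ)
    (Q : Fin n → Matrix (Fin k) (Fin k) ℝ) (r : RedParam n m) : Prop :=
  ∃ p : Fin n → Fin n → ℝ,
    (∀ i j : Fin n, p i ⬝ᵥ p j = if i = j then 1 else 0) ∧
    ∀ j : Fin n,
      (Q j * f (structOf r)).mulVec (p j) = 0 ∧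
      (stack (Q j * f (structOf r))
        (fun i : Fin j.val => p (Fin.castLE j.isLt.le i))).rank = n - 1

/-- The SVAR is exactly identified: for Lebesgue-almost every reduced-form point `(B, L)`
there is a unique structural point in `R` mapping to it under `g`. -/
def ExactlyIdentified {n m k : ℕ} (U N : Set (Struct n m))
    (f : Struct n m → Matrix (Fin k) (Fin n) ℝ)
    (Q : Fin n → Matrix (Fin k) (Fin k) ℝ) : Prop :=
  ∀ᵐ r : RedParam n m, PosDiag r.2 →
    ∃! x : Struct n m, x ∈ RSet U N f Q ∧
      x.2 * x.1⁻¹ = Matrix.of r.1 ∧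
      (x.1 * x.1ᵀ)⁻¹ = cholOf r.2 * (cholOf r.2)ᵀ

lemma aux_posDef_mul_transpose {n : ℕ} {A : Matrix (Fin n) (Fin n) ℝ} (hA : IsUnit A) :
    (A * Aᵀ).PosDef := by
  refine Matrix.PosDef.of_dotProduct_mulVec_pos ?_ (fun v hv => ?_)
  · have := Matrix.isHermitian_mul_conjTranspose_self A
    simpa [Matrix.conjTranspose_eq_transpose_of_trivial] using this
  · have hAt : IsUnit Aᵀ := by
      rw [Matrix.isUnit_iff_isUnit_det, Matrix.det_transpose]
      exact (Matrix.isUnit_iff_isUnit_det A).mp hA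
    have hw : Aᵀ *ᵥ v ≠ 0 := by
      intro h
      apply hv
      have hinj := Matrix.mulVec_injective_iff_isUnit.mpr hAt
      have : Aᵀ *ᵥ v = Aᵀ *ᵥ 0 := by simpa [Matrix.mulVec_zero] using h
      exact hinj this
    have hstar : (star v : Fin n → ℝ) = v := by simp
    rw [hstar, ← Matrix.mulVec_mulVec, Matrix.dotProduct_mulVec, ← Matrix.mulVec_transpose]
    have h2 : 0 ≤ (Aᵀ *ᵥ v) ⬝ᵥ (Aᵀ *ᵥ v) := by
      simpa using dotProduct_self_star_nonneg (Aᵀ *ᵥ v)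
    have h3 : (Aᵀ *ᵥ v) ⬝ᵥ (Aᵀ *ᵥ v) ≠ 0 :=
      fun h => hw ((dotProduct_self_eq_zero).mp h)
    exact lt_of_le_of_ne h2 (Ne.symm h3)

lemma aux_cholesky {n : ℕ} {S : Matrix (Fin n) (Fin n) ℝ} (hS : S.PosDef) :
    ∃ L : Matrix (Fin n) (Fin n) ℝ,
      (∀ i j : Fin n, i < j → L i j = 0) ∧ (∀ i, 0 < L i i) ∧ L * Lᵀ = S := by
  letI : DecidableEq (Fin n) := fun a b => LinearOrder.toDecidableEq a b
  haveI : WellFoundedLT (Fin n) := inferInstance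
  haveI hMinv : Invertible (LDL.lowerInv hS) := LDL.invertibleLowerInv hS
  have hu : IsUnit (LDL.lowerInv hS) := isUnit_of_invertible _
  have hdet : (LDL.lowerInv hS).det ≠ 0 :=
    ((Matrix.isUnit_iff_isUnit_det _).mp hu).ne_zero
  have hd : ∀ i, 0 < LDL.diagEntries hS i := by
    intro i
    have hrow : LDL.lowerInv hS i ≠ 0 := by
      intro h
      exact hdet (Matrix.det_eq_zero_of_row_eq_zero i fun j => congr_fun h j)
    have heq : LDL.diagEntries hS i
        = star (LDL.lowerInv hS i) ⬝ᵥ S *ᵥ (LDL.lowerInv hS i) := by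
      rw [LDL.diagEntries, EuclideanSpace.inner_toLp_toLp]
      simp
      exact dotProduct_comm _ _
    rw [heq]
    exact hS.dotProduct_mulVec_pos hrow
  set d := LDL.diagEntries hS with hd'
  set L₀ : Matrix (Fin n) (Fin n) ℝ :=
    LDL.lower hS * Matrix.diagonal (fun i => Real.sqrt (d i)) with hL₀
  have hlowtri : (LDL.lowerInv hS).BlockTriangular OrderDual.toDual := by
    intro i j hij
    exact LDL.lowerInv_triangular hS hij
  have hlower_tri : (LDL.lower hS).BlockTriangular OrderDual.toDual := by
    rw [LDL.lower]
    exact Matrix.blockTriangular_inv_of_blockTriangular hlowtri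
  have hL₀tri : L₀.BlockTriangular OrderDual.toDual :=
    hlower_tri.mul (Matrix.blockTriangular_diagonal _)
  have hL₀mul : L₀ * L₀ᵀ = S := by
    have hsq : Matrix.diagonal (fun i => Real.sqrt (d i)) *
        (Matrix.diagonal (fun i => Real.sqrt (d i)))ᵀ = LDL.diag hS := by
      ext i j
      by_cases h : i = j
      · subst h
        simp [LDL.diag, Matrix.diagonal_transpose, Matrix.diagonal_mul_diagonal,
          Matrix.diagonal_apply_eq, Real.mul_self_sqrt (hd i).le, hd']
        exact Real.mul_self_sqrt (hd i).le
      · simp [LDL.diag, Matrix.diagonal_transpose, Matrix.diagonal_mul_diagonal,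
          Matrix.diagonal_apply_ne _ h]
    calc L₀ * L₀ᵀ
        = LDL.lower hS * (Matrix.diagonal (fun i => Real.sqrt (d i)) *
            (Matrix.diagonal (fun i => Real.sqrt (d i)))ᵀ) * (LDL.lower hS)ᵀ := by
          rw [hL₀, Matrix.transpose_mul]
          simp only [Matrix.mul_assoc]
      _ = LDL.lower hS * LDL.diag hS * (LDL.lower hS)ᵀ := by rw [hsq]
      _ = S := by
          have := LDL.lower_conj_diag hS
          simpa [Matrix.conjTranspose_eq_transpose_of_trivial] using this
  have hdetL₀ : L₀.det ≠ 0 := by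
    have h1 : (LDL.lower hS).det ≠ 0 := by
      have : LDL.lower hS = (LDL.lowerInv hS)⁻¹ := rfl
      rw [this, Matrix.det_nonsing_inv, Ring.inverse_eq_inv']
      exact inv_ne_zero hdet
    have h2 : (Matrix.diagonal (fun i => Real.sqrt (d i))).det ≠ 0 := by
      rw [Matrix.det_diagonal]
      exact Finset.prod_ne_zero_iff.mpr fun i _ => (Real.sqrt_pos.mpr (hd i)).ne'
    rw [hL₀, Matrix.det_mul]
    exact mul_ne_zero h1 h2
  have hdiagL₀ : ∀ i, L₀ i i ≠ 0 := by
    intro i hzero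
    apply hdetL₀
    rw [Matrix.det_of_lowerTriangular L₀ hL₀tri]
    exact Finset.prod_eq_zero (Finset.mem_univ i) hzero
  set e : Fin n → ℝ := fun i => if 0 < L₀ i i then 1 else -1 with he
  refine ⟨L₀ * Matrix.diagonal e, ?_, ?_, ?_⟩
  · intro i j hij
    rw [Matrix.mul_diagonal,
      hL₀tri (show OrderDual.toDual j < OrderDual.toDual i from hij), zero_mul]
  · intro i
    rw [Matrix.mul_diagonal]
    by_cases h : 0 < L₀ i i
    · simpa [he, h] using h
    · have hlt : L₀ i i < 0 := lt_of_le_of_ne (not_lt.mp h) (hdiagL₀ i)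
      simp only [he, if_neg h]
      nlinarith
  · have hee : Matrix.diagonal e * (Matrix.diagonal e)ᵀ = 1 := by
      rw [Matrix.diagonal_transpose, Matrix.diagonal_mul_diagonal]
      have h1 : (fun i => e i * e i) = fun _ => (1 : ℝ) := by
        funext i; by_cases h : 0 < L₀ i i <;> simp [he, h]
      rw [h1, Matrix.diagonal_one]
    calc (L₀ * Matrix.diagonal e) * (L₀ * Matrix.diagonal e)ᵀ
        = L₀ * (Matrix.diagonal e * (Matrix.diagonal e)ᵀ) * L₀ᵀ := by
          rw [Matrix.transpose_mul]
          simp only [Matrix.mul_assoc]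
      _ = S := by rw [hee, Matrix.mul_one, hL₀mul]

lemma aux_orth_mul {n : ℕ} {P R : Matrix (Fin n) (Fin n) ℝ}
    (hP : IsOrthogonalMat P) (hR : IsOrthogonalMat R) : IsOrthogonalMat (P * R) := by
  unfold IsOrthogonalMat at *
  rw [Matrix.transpose_mul]
  calc P * R * (Rᵀ * Pᵀ) = P * (R * Rᵀ) * Pᵀ := by simp only [Matrix.mul_assoc]
    _ = 1 := by rw [hR, Matrix.mul_one, hP]


/-- **Lemma 1.**  If `f` is admissible, `qⱼ = n − j` for all `j`, and the
restrictions are non-redundant at every reduced-form point `(B, L)` with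
`((L⁻¹)ᵀ, B(L⁻¹)ᵀ) ∈ U`, then every `(A₀, A₊) ∈ U` can be rotated into `R` by some
orthogonal matrix `P`. -/
theorem exists_orthogonal_into_R
    (n m k : ℕ) (hn : 1 ≤ n) (hm : 1 ≤ m) (hk : 1 ≤ k)
    (U : Set (Struct n m))
    (hUunit : ∀ x ∈ U, IsUnit x.1)
    (hUinv : ∀ x ∈ U, ∀ P : Matrix (Fin n) (Fin n) ℝ,
      IsOrthogonalMat P → (x.1 * P, x.2 * P) ∈ U)
    (f : Struct n m → Matrix (Fin k) (Fin n) ℝ)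
    (hf_adm : Admissible U f)
    (N : Set (Struct n m)) (hN : IsNormalization N)
    (Q : Fin n → Matrix (Fin k) (Fin k) ℝ)
    (hQmono : ∀ i j : Fin n, i ≤ j → (Q j).rank ≤ (Q i).rank)
    (hq : ∀ j : Fin n, (Q j).rank = n - (j.val + 1))
    (hnr : ∀ r : RedParam n m, PosDiag r.2 → structOf r ∈ U → NonRedundantAt f Q r) :
    ∀ x ∈ U, ∃ P : Matrix (Fin n) (Fin n) ℝ,
      IsOrthogonalMat P ∧ (x.1 * P, x.2 * P) ∈ RSet U N f Q := by
  intro x hx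
  have hA : IsUnit x.1 := hUunit x hx
  have hdetA : IsUnit x.1.det := (Matrix.isUnit_iff_isUnit_det _).mp hA
  have hSpd : (x.1 * x.1ᵀ).PosDef := aux_posDef_mul_transpose hA
  have hSig : ((x.1 * x.1ᵀ)⁻¹).PosDef := hSpd.inv
  obtain ⟨L, hLtri, hLpos, hLmul⟩ := aux_cholesky hSig
  have hdetS : IsUnit (x.1 * x.1ᵀ).det := (Matrix.isUnit_iff_isUnit_det _).mp hSpd.isUnit
  have hdetSig : ((x.1 * x.1ᵀ)⁻¹).det ≠ 0 :=
    ((Matrix.isUnit_iff_isUnit_det _).mp hSig.isUnit).ne_zero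
  have hdetL : IsUnit L.det := by
    have h1 : L.det * Lᵀ.det = ((x.1 * x.1ᵀ)⁻¹).det := by
      rw [← Matrix.det_mul, hLmul]
    rw [Matrix.det_transpose] at h1
    refine isUnit_iff_ne_zero.mpr fun h0 => hdetSig ?_
    rw [← h1, h0, mul_zero]
  -- the reduced-form point
  set ℓ : LowIdx n → ℝ := fun pr => L pr.1.1 pr.1.2 with hℓ
  set r : RedParam n m := (fun i j => (x.2 * x.1⁻¹) i j, ℓ) with hr
  have hchol : cholOf r.2 = L := by
    ext i j
    by_cases h : j ≤ i
    · simp [cholOf, hr, hℓ, h]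
    · simp only [cholOf, hr, hℓ, Matrix.of_apply, dif_neg h]
      exact (hLtri i j (not_le.mp h)).symm
  have hPD : PosDiag r.2 := fun i => hLpos i
  -- the orthogonal matrix P₀
  set P₀ : Matrix (Fin n) (Fin n) ℝ := x.1⁻¹ * (L⁻¹)ᵀ with hP₀def
  have hLtLinv : (L⁻¹)ᵀ * L⁻¹ = x.1 * x.1ᵀ := by
    rw [Matrix.transpose_nonsing_inv, ← Matrix.mul_inv_rev, hLmul,
      Matrix.nonsing_inv_nonsing_inv _ hdetS]
  have hP₀ : IsOrthogonalMat P₀ := by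
    unfold IsOrthogonalMat
    rw [hP₀def, Matrix.transpose_mul]
    calc x.1⁻¹ * (L⁻¹)ᵀ * (((L⁻¹)ᵀ)ᵀ * (x.1⁻¹)ᵀ)
        = x.1⁻¹ * ((L⁻¹)ᵀ * L⁻¹) * (x.1⁻¹)ᵀ := by
          rw [Matrix.transpose_transpose]
          simp only [Matrix.mul_assoc]
      _ = x.1⁻¹ * (x.1 * (x.1ᵀ * (x.1ᵀ)⁻¹)) := by
          rw [hLtLinv, Matrix.transpose_nonsing_inv]
          simp only [Matrix.mul_assoc]
      _ = 1 := by
          rw [Matrix.mul_nonsing_inv _ (by rwa [Matrix.det_transpose]),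
            Matrix.mul_one, Matrix.nonsing_inv_mul _ hdetA]
  have hs1 : x.1 * P₀ = (L⁻¹)ᵀ := by
    rw [hP₀def, ← Matrix.mul_assoc, Matrix.mul_nonsing_inv _ hdetA, Matrix.one_mul]
  have hs2 : x.2 * P₀ = Matrix.of r.1 * (L⁻¹)ᵀ := by
    have : Matrix.of r.1 = x.2 * x.1⁻¹ := rfl
    rw [this, hP₀def, Matrix.mul_assoc]
  have hstruct : structOf r = (x.1 * P₀, x.2 * P₀) := by
    unfold structOf
    rw [hchol, hs1, hs2]
  have hU' : structOf r ∈ U := by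
    rw [hstruct]; exact hUinv x hx P₀ hP₀
  obtain ⟨p, hp, hpz⟩ := hnr r hPD hU'
  -- the orthogonal matrix P₁
  set P₁ : Matrix (Fin n) (Fin n) ℝ := (Matrix.of p)ᵀ with hP₁def
  have hP₁' : Matrix.of p * (Matrix.of p)ᵀ = 1 := by
    ext i j
    have := hp i j
    simpa [Matrix.mul_apply, Matrix.one_apply, dotProduct] using this
  have hP₁ : IsOrthogonalMat P₁ := by
    unfold IsOrthogonalMat
    rw [hP₁def, Matrix.transpose_transpose]
    exact mul_eq_one_comm.mp hP₁'
  -- the normalization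
  set x'' : Struct n m := ((structOf r).1 * P₁, (structOf r).2 * P₁) with hx''def
  have hU'' : x'' ∈ U := hUinv (structOf r) hU' P₁ hP₁
  obtain ⟨dsign, ⟨hdpm, hdN⟩, -⟩ := hN x'' (hUunit x'' hU'')
  set D : Matrix (Fin n) (Fin n) ℝ := Matrix.diagonal dsign with hDdef
  have hDorth : IsOrthogonalMat D := by
    unfold IsOrthogonalMat
    rw [hDdef, Matrix.diagonal_transpose, Matrix.diagonal_mul_diagonal]
    have h1 : (fun i => dsign i * dsign i) = fun _ => (1 : ℝ) := by
      funext i; rcases hdpm i with h | h <;> rw [h] <;> norm_num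
    rw [h1, Matrix.diagonal_one]
  refine ⟨P₀ * (P₁ * D), aux_orth_mul hP₀ (aux_orth_mul hP₁ hDorth), ?_⟩
  have hpair : (x.1 * (P₀ * (P₁ * D)), x.2 * (P₀ * (P₁ * D)))
      = (x''.1 * D, x''.2 * D) := by
    rw [hx''def, hstruct]
    simp only [Matrix.mul_assoc]
  rw [show (x.1 * (P₀ * (P₁ * D)), x.2 * (P₀ * (P₁ * D))) = (x''.1 * D, x''.2 * D)
    from hpair]
  have hfx'' : f x'' = f (structOf r) * P₁ := hf_adm (structOf r) hU' P₁ hP₁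
  have hfD : f (x''.1 * D, x''.2 * D) = f x'' * D := hf_adm x'' hU'' D hDorth
  refine ⟨⟨hUinv x'' hU'' D hDorth, hdN⟩, ?_⟩
  intro j i
  have hcol : ((Q j * f (structOf r)) * P₁) i j = 0 := by
    have h0 := congr_fun (hpz j).1 i
    simpa [Matrix.mul_apply, Matrix.mulVec, dotProduct, hP₁def] using h0
  rw [hfD, ← Matrix.mul_assoc, hDdef, Matrix.mul_diagonal, hfx'', ← Matrix.mul_assoc,
    hcol, zero_mul]
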